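/- Let D ≥ 1, let ℓ: ℝ^D → [0, B_ℓ] be a bounded measurable loss, let f, f̂: ℝ^D → ℝ^D be measurable maps, let q be a factorized probability density on ℝ^D and q̌ any probability density on ℝ^D. Define R = ∫ ℓ(f(s)) q(s) ds and the symmetrized kernel ℓ̃(s₁,…,s_D) = (1/D!) Σ_{π ∈ 𝔖_D} ℓ(f̂(s_{π(1)}^{(1)}, …, s_{π(D)}^{(D)})). Then R − ∫ ℓ̃(s₁,…,s_D) Π_{i=1}^D q̌(s_i) ds₁⋯ds_D ≤ ∫ |ℓ(f(s)) − ℓ(f̂(s))| q(s) ds + D · B_ℓ · ∫ |q(s) − q̌(s)| ds. -/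

import Mathlib

open MeasureTheory

def uncurryEquiv (D : ℕ) : (Fin D → Fin D → ℝ) ≃ᵐ ((Fin D × Fin D) → ℝ) where
  toEquiv := (Equiv.curry (Fin D) (Fin D) ℝ).symm
  measurable_toFun :=
    measurable_pi_lambda _ fun z => (measurable_pi_apply z.2).comp (measurable_pi_apply z.1)
  measurable_invFun :=
    measurable_pi_lambda _ fun i => measurable_pi_lambda _ fun d => measurable_pi_apply (i, d)

lemma uncurryEquiv_mp (D : ℕ) :
    MeasurePreserving (uncurryEquiv D) volume volume := by
  refine ⟨(uncurryEquiv D).measurable, ?_⟩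
  have hm := (uncurryEquiv D).measurable
  have hpi : (volume : Measure ((Fin D × Fin D) → ℝ)) = Measure.pi fun _ => volume := volume_pi
  rw [hpi]
  refine (Measure.pi_eq fun s hs => ?_).symm
  rw [Measure.map_apply hm (MeasurableSet.univ_pi hs)]
  have hpre : (uncurryEquiv D) ⁻¹' (Set.pi Set.univ s)
      = Set.pi Set.univ (fun i => Set.pi Set.univ (fun d => s (i, d))) := by
    ext t
    simp only [Set.mem_preimage, Set.mem_pi, Set.mem_univ, forall_true_left, Prod.forall]
    exact ⟨fun h i d => h i d, fun h i d => h i d⟩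
  rw [hpre, volume_pi_pi]
  simp_rw [volume_pi_pi]
  exact (Fintype.prod_prod_type fun z => volume (s z)).symm

lemma diag_marginal {D : ℕ} (qd : Fin D → ℝ → ℝ) (hqd1 : ∀ d, ∫ x, qd d x = 1)
    (g : (Fin D → ℝ) → ℝ) :
    (∫ t : Fin D → Fin D → ℝ, g (fun d => t d d) * ∏ i, ∏ d, qd d (t i d))
      = ∫ s : Fin D → ℝ, g s * ∏ d, qd d (s d) := by
  classical
  set p : Fin D × Fin D → Prop := fun z => z.1 = z.2 with hp
  have : DecidablePred p := fun z => inferInstanceAs (Decidable (z.1 = z.2))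
  let eD : Fin D ≃ {z : Fin D × Fin D // p z} :=
    { toFun := fun d => ⟨(d, d), rfl⟩
      invFun := fun z => z.1.1
      left_inv := fun d => rfl
      right_inv := fun z => Subtype.ext (Prod.ext rfl z.2) }
  -- step 1 : uncurry
  have h1 : (∫ t : Fin D → Fin D → ℝ, g (fun d => t d d) * ∏ i, ∏ d, qd d (t i d))
      = ∫ y : (Fin D × Fin D) → ℝ, g (fun d => y (d, d)) * ∏ z, qd z.2 (y z) := by
    rw [← (uncurryEquiv_mp D).integral_comp'
      (fun y => g (fun d => y (d, d)) * ∏ z, qd z.2 (y z))]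
    refine integral_congr_ae (Filter.Eventually.of_forall fun t => ?_)
    have hpp : (∏ z : Fin D × Fin D, qd z.2 ((uncurryEquiv D) t z)) = ∏ i, ∏ d, qd d (t i d) :=
      Fintype.prod_prod_type fun z => qd z.2 (t z.1 z.2)
    show (g fun d => t d d) * (∏ i, ∏ d, qd d (t i d))
        = (g fun d => (uncurryEquiv D) t (d, d)) * ∏ z, qd z.2 ((uncurryEquiv D) t z)
    rw [hpp]
    rfl
  -- step 2 : split diag / offdiag
  have h2 : (∫ y : (Fin D × Fin D) → ℝ, g (fun d => y (d, d)) * ∏ z, qd z.2 (y z))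
      = ∫ vw : ({z : Fin D × Fin D // p z} → ℝ) × ({z : Fin D × Fin D // ¬ p z} → ℝ),
          (g (fun d => vw.1 (eD d)) * ∏ z : {z : Fin D × Fin D // p z}, qd z.1.2 (vw.1 z))
            * ∏ z : {z : Fin D × Fin D // ¬ p z}, qd z.1.2 (vw.2 z) := by
    rw [← (volume_preserving_piEquivPiSubtypeProd (fun _ : Fin D × Fin D => ℝ) p).integral_comp']
    refine integral_congr_ae (Filter.Eventually.of_forall fun y => ?_)
    have hsplit : ((∏ z : {z : Fin D × Fin D // p z}, qd z.1.2 (y z))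
        * ∏ z : {z : Fin D × Fin D // ¬ p z}, qd z.1.2 (y z))
        = ∏ z : Fin D × Fin D, qd z.2 (y z) :=
      Fintype.prod_subtype_mul_prod_subtype p fun z => qd z.2 (y z)
    show (g fun d => y (d, d)) * (∏ z : Fin D × Fin D, qd z.2 (y z))
        = (g fun d => y (d, d)) * (∏ z : {z : Fin D × Fin D // p z}, qd z.1.2 (y z))
            * ∏ z : {z : Fin D × Fin D // ¬ p z}, qd z.1.2 (y z)
    rw [mul_assoc, hsplit]
  -- step 3 : Fubini on the product
  have h3 : (∫ vw : ({z : Fin D × Fin D // p z} → ℝ) × ({z : Fin D × Fin D // ¬ p z} → ℝ),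
          (g (fun d => vw.1 (eD d)) * ∏ z : {z : Fin D × Fin D // p z}, qd z.1.2 (vw.1 z))
            * ∏ z : {z : Fin D × Fin D // ¬ p z}, qd z.1.2 (vw.2 z))
      = (∫ v : {z : Fin D × Fin D // p z} → ℝ,
            g (fun d => v (eD d)) * ∏ z : {z : Fin D × Fin D // p z}, qd z.1.2 (v z))
          * ∫ w : {z : Fin D × Fin D // ¬ p z} → ℝ,
              ∏ z : {z : Fin D × Fin D // ¬ p z}, qd z.1.2 (w z) := by
    rw [Measure.volume_eq_prod]
    exact integral_prod_mul
      (fun v : {z : Fin D × Fin D // p z} → ℝ =>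
        g (fun d => v (eD d)) * ∏ z : {z : Fin D × Fin D // p z}, qd z.1.2 (v z))
      (fun w : {z : Fin D × Fin D // ¬ p z} → ℝ =>
        ∏ z : {z : Fin D × Fin D // ¬ p z}, qd z.1.2 (w z))
  have h4 : (∫ w : {z : Fin D × Fin D // ¬ p z} → ℝ,
      ∏ z : {z : Fin D × Fin D // ¬ p z}, qd z.1.2 (w z)) = 1 := by
    have h := integral_fintype_prod_volume_eq_prod (𝕜 := ℝ) (ι := {z : Fin D × Fin D // ¬ p z})
      (fun z : {z : Fin D × Fin D // ¬ p z} => qd z.1.2)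
    rw [h]
    simp [hqd1]
  -- step 4 : transport the diagonal factor back to `Fin D → ℝ`
  have h5 : (∫ v : {z : Fin D × Fin D // p z} → ℝ,
        g (fun d => v (eD d)) * ∏ z : {z : Fin D × Fin D // p z}, qd z.1.2 (v z))
      = ∫ s : Fin D → ℝ, g s * ∏ d, qd d (s d) := by
    rw [← (volume_measurePreserving_piCongrLeft (fun _ : {z : Fin D × Fin D // p z} => ℝ)
      eD).integral_comp']
    refine integral_congr_ae (Filter.Eventually.of_forall fun s => ?_)
    have hC : ∀ d, (MeasurableEquiv.piCongrLeft (fun _ : {z : Fin D × Fin D // p z} => ℝ) eD)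
        s (eD d) = s d := by
      intro d
      rw [MeasurableEquiv.coe_piCongrLeft]
      exact Equiv.piCongrLeft_apply_apply (fun _ : {z : Fin D × Fin D // p z} => ℝ) eD s d
    have hprod : (∏ z : {z : Fin D × Fin D // p z},
        qd z.1.2 ((MeasurableEquiv.piCongrLeft (fun _ : {z : Fin D × Fin D // p z} => ℝ) eD) s z))
        = ∏ d, qd d (s d) := by
      rw [← Equiv.prod_comp eD (fun z =>
        qd z.1.2 ((MeasurableEquiv.piCongrLeft (fun _ : {z : Fin D × Fin D // p z} => ℝ) eD) s z))]
      refine Finset.prod_congr rfl fun d _ => ?_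
      rw [hC d]
      rfl
    show (g fun d => (MeasurableEquiv.piCongrLeft (fun _ : {z : Fin D × Fin D // p z} => ℝ) eD)
          s (eD d))
        * (∏ z : {z : Fin D × Fin D // p z},
            qd z.1.2 ((MeasurableEquiv.piCongrLeft
              (fun _ : {z : Fin D × Fin D // p z} => ℝ) eD) s z))
        = g s * ∏ d, qd d (s d)
    rw [hprod, show (fun d => (MeasurableEquiv.piCongrLeft
        (fun _ : {z : Fin D × Fin D // p z} => ℝ) eD) s (eD d)) = s from funext hC]
  rw [h1, h2, h3, h4, h5, mul_one]

lemma perm_integral {D : ℕ} (F : (Fin D → ℝ) → ℝ) (qc : (Fin D → ℝ) → ℝ)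
    (π : Equiv.Perm (Fin D)) :
    (∫ t : Fin D → Fin D → ℝ, F (fun d => t (π d) d) * ∏ i, qc (t i))
      = ∫ t : Fin D → Fin D → ℝ, F (fun d => t d d) * ∏ i, qc (t i) := by
  have h := (volume_measurePreserving_piCongrLeft (fun _ : Fin D => (Fin D → ℝ)) π).integral_comp'
    (fun t : Fin D → Fin D → ℝ => F (fun d => t (π d) d) * ∏ i, qc (t i))
  refine Eq.trans h.symm ?_
  refine integral_congr_ae (Filter.Eventually.of_forall fun t => ?_)
  have hΦ : ∀ i, (MeasurableEquiv.piCongrLeft (fun _ : Fin D => (Fin D → ℝ)) π) t i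
      = t (π.symm i) := by
    intro i
    rw [MeasurableEquiv.coe_piCongrLeft]
    simpa using Equiv.piCongrLeft_apply_apply (fun _ : Fin D => (Fin D → ℝ)) π t (π.symm i)
  show F (fun d => (MeasurableEquiv.piCongrLeft (fun _ : Fin D => (Fin D → ℝ)) π) t (π d) d)
        * (∏ i, qc ((MeasurableEquiv.piCongrLeft (fun _ : Fin D => (Fin D → ℝ)) π) t i))
      = F (fun d => t d d) * ∏ i, qc (t i)
  have h1 : (fun d => (MeasurableEquiv.piCongrLeft (fun _ : Fin D => (Fin D → ℝ)) π) t (π d) d)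
      = fun d => t d d := by
    funext d
    rw [hΦ (π d), Equiv.symm_apply_apply]
  have h2 : (∏ i, qc ((MeasurableEquiv.piCongrLeft (fun _ : Fin D => (Fin D → ℝ)) π) t i))
      = ∏ i, qc (t i) := by
    rw [Finset.prod_congr rfl fun i _ => by rw [hΦ i]]
    exact Equiv.prod_comp π.symm fun j => qc (t j)
  rw [h1, h2]


/-- Approximation bound: the risk `R = ∫ ℓ(f(s)) q(s) ds` minus the product-expectation of the
symmetrized kernel built from `f̂` and density `q̌` is at most the `q`-weighted `L¹` difference
of the losses plus `D · B_ℓ` times the `L¹` distance of the densities. -/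
theorem stmt10 (D : ℕ) (hD : 1 ≤ D) (Bl : ℝ)
    (ℓ : (Fin D → ℝ) → ℝ) (hℓm : Measurable ℓ) (hℓb : ∀ z, ℓ z ∈ Set.Icc (0 : ℝ) Bl)
    (f fhat : (Fin D → ℝ) → (Fin D → ℝ)) (hfm : Measurable f) (hfhm : Measurable fhat)
    (qd : Fin D → ℝ → ℝ) (hqdm : ∀ d, Measurable (qd d)) (hqd0 : ∀ d x, 0 ≤ qd d x)
    (hqd1 : ∀ d, ∫ x, qd d x = 1)
    (q : (Fin D → ℝ) → ℝ) (hq : ∀ s, q s = ∏ d, qd d (s d))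
    (qc : (Fin D → ℝ) → ℝ) (hqcm : Measurable qc) (hqc0 : ∀ s, 0 ≤ qc s)
    (hqc1 : ∫ s, qc s = 1)
    (ℓt : (Fin D → (Fin D → ℝ)) → ℝ)
    (hℓt : ∀ t, ℓt t = ((D.factorial : ℕ) : ℝ)⁻¹ *
      ∑ π : Equiv.Perm (Fin D), ℓ (fhat fun d => t (π d) d)) :
    (∫ s, ℓ (f s) * q s) -
        (∫ t : Fin D → (Fin D → ℝ), ℓt t * ∏ i, qc (t i)) ≤
      (∫ s, |ℓ (f s) - ℓ (fhat s)| * q s) + D * Bl * ∫ s, |q s - qc s| := by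
  classical
  -- basic positivity / integrability facts
  have hBl0 : (0 : ℝ) ≤ Bl := le_trans (hℓb (fun _ => 0)).1 (hℓb (fun _ => 0)).2
  have Iqd : ∀ d, Integrable (qd d) := by
    intro d
    by_contra h
    have := hqd1 d
    rw [integral_undef h] at this
    exact one_ne_zero this.symm
  have hqeq : q = fun s => ∏ d, qd d (s d) := funext hq
  have Iq : Integrable q := by
    rw [hqeq]; exact Integrable.fintype_prod (𝕜 := ℝ) Iqd
  have Iqc : Integrable qc := by
    by_contra h
    rw [integral_undef h] at hqc1
    exact one_ne_zero hqc1.symm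
  have hq0 : ∀ s, 0 ≤ q s := fun s =>
    (hq s) ▸ Finset.prod_nonneg fun d _ => hqd0 d (s d)
  have hqm : Measurable q := by
    rw [hqeq]
    exact Finset.measurable_prod _ fun d _ => (hqdm d).comp (measurable_pi_apply d)
  have hqint1 : ∫ s, q s = 1 := by
    rw [hqeq]
    have h := integral_fintype_prod_volume_eq_prod (𝕜 := ℝ) (ι := Fin D) qd
    rw [h]
    simp [hqd1]
  have habs : ∀ z w, |ℓ z - ℓ w| ≤ Bl := fun z w =>
    abs_sub_le_iff.mpr ⟨by linarith [(hℓb z).2, (hℓb w).1], by linarith [(hℓb w).2, (hℓb z).1]⟩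
  have mdiag : Measurable (fun t : Fin D → Fin D → ℝ => fun d => t d d) :=
    measurable_pi_lambda _ fun d => (measurable_pi_apply d).comp (measurable_pi_apply d)
  -- the hybrid densities
  set c : ℕ → Fin D → ((Fin D → ℝ) → ℝ) := fun k i => if (i : ℕ) < k then qc else q with hc
  have hcI : ∀ k i, Integrable (c k i) := by
    intro k i; by_cases h : (i : ℕ) < k <;> simp [hc, h, Iq, Iqc]
  have hc0 : ∀ k i s, 0 ≤ c k i s := by
    intro k i s; by_cases h : (i : ℕ) < k <;> simp [hc, h, hq0 s, hqc0 s]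
  have hcm : ∀ k i, Measurable (c k i) := by
    intro k i; by_cases h : (i : ℕ) < k <;> simp [hc, h, hqm, hqcm]
  have hc1 : ∀ k i, ∫ s, c k i s = 1 := by
    intro k i; by_cases h : (i : ℕ) < k <;> simp [hc, h, hqint1, hqc1]
  -- generic integrability of the hybrid integrands
  have IJf : ∀ (h : Fin D → ((Fin D → ℝ) → ℝ)), (∀ i, Integrable (h i)) →
      (∀ i, Measurable (h i)) → (∀ i s, 0 ≤ h i s) →
      ∀ (m : (Fin D → Fin D → ℝ) → (Fin D → ℝ)), Measurable m →
      Integrable (fun t : Fin D → Fin D → ℝ => ℓ (fhat (m t)) * ∏ i, h i (t i)) := by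
    intro h hI hm h0 m hmm'
    have hPm : Measurable fun t : Fin D → Fin D → ℝ => ∏ i, h i (t i) :=
      Finset.measurable_prod _ fun i _ => (hm i).comp (measurable_pi_apply i)
    refine Integrable.mono' ((Integrable.fintype_prod (𝕜 := ℝ) hI).const_mul Bl)
      ((hℓm.comp (hfhm.comp hmm')).mul hPm).aestronglyMeasurable
      (Filter.Eventually.of_forall fun t => ?_)
    have h0' : 0 ≤ ∏ i, h i (t i) := Finset.prod_nonneg fun i _ => h0 i (t i)
    rw [Real.norm_eq_abs, abs_mul, abs_of_nonneg h0', abs_of_nonneg (hℓb _).1]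
    exact mul_le_mul_of_nonneg_right (hℓb _).2 h0'
  set J : ℕ → ℝ :=
    fun k => ∫ t : Fin D → Fin D → ℝ, ℓ (fhat fun d => t d d) * ∏ i, c k i (t i) with hJ
  have IJ : ∀ k, Integrable
      (fun t : Fin D → Fin D → ℝ => ℓ (fhat fun d => t d d) * ∏ i, c k i (t i)) :=
    fun k => IJf (c k) (hcI k) (hcm k) (hc0 k) _ mdiag
  -- Step A : loss swap
  have IA1 : Integrable (fun s => ℓ (f s) * q s) := by
    refine Integrable.mono' (Iq.const_mul Bl) ((hℓm.comp hfm).mul hqm).aestronglyMeasurable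
      (Filter.Eventually.of_forall fun s => ?_)
    rw [Real.norm_eq_abs, abs_mul, abs_of_nonneg (hq0 s), abs_of_nonneg (hℓb _).1]
    exact mul_le_mul_of_nonneg_right (hℓb _).2 (hq0 s)
  have IA2 : Integrable (fun s => ℓ (fhat s) * q s) := by
    refine Integrable.mono' (Iq.const_mul Bl) ((hℓm.comp hfhm).mul hqm).aestronglyMeasurable
      (Filter.Eventually.of_forall fun s => ?_)
    rw [Real.norm_eq_abs, abs_mul, abs_of_nonneg (hq0 s), abs_of_nonneg (hℓb _).1]
    exact mul_le_mul_of_nonneg_right (hℓb _).2 (hq0 s)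
  have IA3 : Integrable (fun s => |ℓ (f s) - ℓ (fhat s)| * q s) := by
    refine Integrable.mono' (Iq.const_mul Bl)
      ((((hℓm.comp hfm).sub (hℓm.comp hfhm)).abs.mul hqm)).aestronglyMeasurable
      (Filter.Eventually.of_forall fun s => ?_)
    rw [Real.norm_eq_abs, abs_mul, abs_of_nonneg (hq0 s), abs_abs]
    exact mul_le_mul_of_nonneg_right (habs _ _) (hq0 s)
  have stepA : (∫ s, ℓ (f s) * q s) - (∫ s, ℓ (fhat s) * q s)
      ≤ ∫ s, |ℓ (f s) - ℓ (fhat s)| * q s := by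
    rw [← integral_sub IA1 IA2]
    refine integral_mono (IA1.sub IA2) IA3 fun s => ?_
    have h : ℓ (f s) * q s - ℓ (fhat s) * q s = (ℓ (f s) - ℓ (fhat s)) * q s := by ring
    show ℓ (f s) * q s - ℓ (fhat s) * q s ≤ |ℓ (f s) - ℓ (fhat s)| * q s
    rw [h]
    exact mul_le_mul_of_nonneg_right (le_abs_self _) (hq0 s)
  -- Step B : J 0 is the q-risk of fhat
  have stepB : J 0 = ∫ s, ℓ (fhat s) * q s := by
    have h0 : ∀ i : Fin D, c 0 i = q := fun i => by simp [hc]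
    have h1 : J 0 = ∫ t : Fin D → Fin D → ℝ,
        ℓ (fhat fun d => t d d) * ∏ i, ∏ d, qd d (t i d) := by
      simp only [hJ]
      refine integral_congr_ae (Filter.Eventually.of_forall fun t => ?_)
      show ℓ (fhat fun d => t d d) * (∏ i, c 0 i (t i))
          = ℓ (fhat fun d => t d d) * ∏ i, ∏ d, qd d (t i d)
      congr 1
      refine Finset.prod_congr rfl fun i _ => ?_
      rw [h0 i, hq (t i)]
    rw [h1, diag_marginal qd hqd1 (fun s => ℓ (fhat s))]
    refine integral_congr_ae (Filter.Eventually.of_forall fun s => ?_)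
    show ℓ (fhat s) * (∏ d, qd d (s d)) = ℓ (fhat s) * q s
    rw [hq s]
  -- Step D : one telescoping step
  have stepD : ∀ k, k < D → J k - J (k + 1) ≤ Bl * ∫ s, |q s - qc s| := by
    intro k hk
    set κ : Fin D := ⟨k, hk⟩ with hκ
    have hsame : ∀ i : Fin D, i ≠ κ → c (k + 1) i = c k i := by
      intro i hi
      have hne : (i : ℕ) ≠ k := fun h => hi (Fin.ext h)
      by_cases h : (i : ℕ) < k
      · simp [hc, h, Nat.lt_succ_of_lt h]
      · have h2 : ¬ (i : ℕ) < k + 1 := by omega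
        simp [hc, h, h2]
    have hck : c k κ = q := by simp [hc, hκ]
    have hck1 : c (k + 1) κ = qc := by simp [hc, hκ]
    have hprodd : ∀ t : Fin D → Fin D → ℝ,
        (∏ i, c k i (t i)) - (∏ i, c (k + 1) i (t i))
          = (q (t κ) - qc (t κ)) * ∏ i ∈ Finset.univ.erase κ, c k i (t i) := by
      intro t
      rw [← Finset.mul_prod_erase Finset.univ (fun i => c k i (t i)) (Finset.mem_univ κ),
        ← Finset.mul_prod_erase Finset.univ (fun i => c (k + 1) i (t i)) (Finset.mem_univ κ)]
      have hP : (∏ i ∈ Finset.univ.erase κ, c (k + 1) i (t i))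
          = ∏ i ∈ Finset.univ.erase κ, c k i (t i) :=
        Finset.prod_congr rfl fun i hi => by rw [hsame i (Finset.ne_of_mem_erase hi)]
      rw [hP, hck, hck1, sub_mul]
    have hdiff : J k - J (k + 1) = ∫ t : Fin D → Fin D → ℝ,
        ℓ (fhat fun d => t d d) * ((∏ i, c k i (t i)) - ∏ i, c (k + 1) i (t i)) := by
      simp only [hJ]
      rw [← integral_sub (IJ k) (IJ (k + 1))]
      refine integral_congr_ae (Filter.Eventually.of_forall fun t => ?_)
      show ℓ (fhat fun d => t d d) * (∏ i, c k i (t i))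
          - ℓ (fhat fun d => t d d) * (∏ i, c (k + 1) i (t i)) = _
      ring
    set F : Fin D → ((Fin D → ℝ) → ℝ) :=
      fun i => if i = κ then (fun s => |q s - qc s|) else c k i with hF
    have IF : ∀ i, Integrable (F i) := by
      intro i
      by_cases h : i = κ
      · simpa [hF, h] using (Iq.sub Iqc).abs
      · simpa [hF, h] using hcI k i
    have hFk : F κ = fun s => |q s - qc s| := by simp [hF]
    have hFo : ∀ i, i ≠ κ → F i = c k i := fun i hi => by simp [hF, hi]
    have hF0 : ∀ i s, 0 ≤ F i s := by
      intro i s; by_cases h : i = κ <;> simp [hF, h, abs_nonneg, hc0 k i s]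
    have hbound : ∀ t : Fin D → Fin D → ℝ,
        ℓ (fhat fun d => t d d) * ((∏ i, c k i (t i)) - ∏ i, c (k + 1) i (t i))
          ≤ Bl * ∏ i, F i (t i) := by
      intro t
      have herase0 : 0 ≤ ∏ i ∈ Finset.univ.erase κ, c k i (t i) :=
        Finset.prod_nonneg fun i _ => hc0 k i (t i)
      have hPF : (∏ i, F i (t i))
          = |q (t κ) - qc (t κ)| * ∏ i ∈ Finset.univ.erase κ, c k i (t i) := by
        rw [← Finset.mul_prod_erase Finset.univ (fun i => F i (t i)) (Finset.mem_univ κ), hFk]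
        congr 1
        exact Finset.prod_congr rfl fun i hi => by rw [hFo i (Finset.ne_of_mem_erase hi)]
      have hΔ : |(∏ i, c k i (t i)) - ∏ i, c (k + 1) i (t i)|
          = |q (t κ) - qc (t κ)| * ∏ i ∈ Finset.univ.erase κ, c k i (t i) := by
        rw [hprodd t, abs_mul, abs_of_nonneg herase0]
      calc ℓ (fhat fun d => t d d) * ((∏ i, c k i (t i)) - ∏ i, c (k + 1) i (t i))
          ≤ |ℓ (fhat fun d => t d d) * ((∏ i, c k i (t i)) - ∏ i, c (k + 1) i (t i))| :=
            le_abs_self _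
        _ = ℓ (fhat fun d => t d d) * |(∏ i, c k i (t i)) - ∏ i, c (k + 1) i (t i)| := by
            rw [abs_mul, abs_of_nonneg (hℓb _).1]
        _ ≤ Bl * |(∏ i, c k i (t i)) - ∏ i, c (k + 1) i (t i)| :=
            mul_le_mul_of_nonneg_right (hℓb _).2 (abs_nonneg _)
        _ = Bl * ∏ i, F i (t i) := by rw [hΔ, hPF]
    have IY : Integrable (fun t : Fin D → Fin D → ℝ => Bl * ∏ i, F i (t i)) :=
      (Integrable.fintype_prod (𝕜 := ℝ) IF).const_mul Bl
    have hIX : Integrable (fun t : Fin D → Fin D → ℝ =>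
        ℓ (fhat fun d => t d d) * ((∏ i, c k i (t i)) - ∏ i, c (k + 1) i (t i))) := by
      refine Integrable.congr ((IJ k).sub (IJ (k + 1)))
        (Filter.Eventually.of_forall fun t => ?_)
      show ℓ (fhat fun d => t d d) * (∏ i, c k i (t i))
          - ℓ (fhat fun d => t d d) * (∏ i, c (k + 1) i (t i)) = _
      ring
    have hmono := integral_mono hIX IY hbound
    have hY : (∫ t : Fin D → Fin D → ℝ, Bl * ∏ i, F i (t i)) = Bl * ∫ s, |q s - qc s| := by
      rw [integral_const_mul]
      congr 1
      have h := integral_fintype_prod_volume_eq_prod (𝕜 := ℝ) (ι := Fin D) F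
      rw [h, ← Finset.mul_prod_erase Finset.univ (fun i => ∫ s, F i s) (Finset.mem_univ κ),
        hFk]
      have hone : (∏ i ∈ Finset.univ.erase κ, ∫ s, F i s) = 1 := by
        refine Finset.prod_eq_one fun i hi => ?_
        rw [hFo i (Finset.ne_of_mem_erase hi)]
        exact hc1 k i
      rw [hone, mul_one]
    rw [hdiff]
    calc (∫ t : Fin D → Fin D → ℝ,
        ℓ (fhat fun d => t d d) * ((∏ i, c k i (t i)) - ∏ i, c (k + 1) i (t i)))
        ≤ ∫ t : Fin D → Fin D → ℝ, Bl * ∏ i, F i (t i) := hmono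
      _ = Bl * ∫ s, |q s - qc s| := hY
  -- telescoping
  have tele : J 0 - J D = ∑ k ∈ Finset.range D, (J k - J (k + 1)) :=
    (Finset.sum_range_sub' J D).symm
  have teleBound : J 0 - J D ≤ D * (Bl * ∫ s, |q s - qc s|) := by
    rw [tele]
    calc (∑ k ∈ Finset.range D, (J k - J (k + 1)))
        ≤ ∑ _k ∈ Finset.range D, Bl * ∫ s, |q s - qc s| :=
          Finset.sum_le_sum fun k hk => stepD k (Finset.mem_range.mp hk)
      _ = D * (Bl * ∫ s, |q s - qc s|) := by
          rw [Finset.sum_const, Finset.card_range, nsmul_eq_mul]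
  -- Step E : the symmetrized integral equals J D
  have hcD : ∀ i : Fin D, c D i = qc := fun i => by simp [hc, i.isLt]
  have stepE : (∫ t : Fin D → (Fin D → ℝ), ℓt t * ∏ i, qc (t i)) = J D := by
    have h1 : (∫ t : Fin D → (Fin D → ℝ), ℓt t * ∏ i, qc (t i))
        = ∫ t : Fin D → (Fin D → ℝ), ((D.factorial : ℕ) : ℝ)⁻¹ *
            ∑ π : Equiv.Perm (Fin D), (ℓ (fhat fun d => t (π d) d) * ∏ i, qc (t i)) := by
      refine integral_congr_ae (Filter.Eventually.of_forall fun t => ?_)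
      show ℓt t * (∏ i, qc (t i)) = _
      rw [hℓt t, mul_assoc]
      congr 1
      rw [Finset.sum_mul]
    have hint : ∀ π : Equiv.Perm (Fin D), Integrable (fun t : Fin D → Fin D → ℝ =>
        ℓ (fhat fun d => t (π d) d) * ∏ i, qc (t i)) := by
      intro π
      have hm : Measurable (fun t : Fin D → Fin D → ℝ => fun d => t (π d) d) :=
        measurable_pi_lambda _ fun d => (measurable_pi_apply d).comp (measurable_pi_apply (π d))
      exact IJf (fun _ => qc) (fun _ => Iqc) (fun _ => hqcm) (fun _ s => hqc0 s) _ hm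
    have hterm : ∀ π : Equiv.Perm (Fin D),
        (∫ t : Fin D → Fin D → ℝ, ℓ (fhat fun d => t (π d) d) * ∏ i, qc (t i)) = J D := by
      intro π
      rw [perm_integral (fun s => ℓ (fhat s)) qc π]
      simp only [hJ]
      refine integral_congr_ae (Filter.Eventually.of_forall fun t => ?_)
      show ℓ (fhat fun d => t d d) * (∏ i, qc (t i))
          = ℓ (fhat fun d => t d d) * ∏ i, c D i (t i)
      congr 1
      exact Finset.prod_congr rfl fun i _ => by rw [hcD i]
    rw [h1, integral_const_mul, integral_finset_sum _ (fun π _ => hint π),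
      Finset.sum_congr rfl fun π _ => hterm π, Finset.sum_const, Finset.card_univ,
      Fintype.card_perm, Fintype.card_fin, nsmul_eq_mul, ← mul_assoc,
      inv_mul_cancel₀ (by exact_mod_cast (Nat.factorial_pos D).ne'), one_mul]
  -- assemble
  calc (∫ s, ℓ (f s) * q s) - (∫ t : Fin D → (Fin D → ℝ), ℓt t * ∏ i, qc (t i))
      = ((∫ s, ℓ (f s) * q s) - ∫ s, ℓ (fhat s) * q s) + (J 0 - J D) := by
        rw [stepE, stepB]; ring
    _ ≤ (∫ s, |ℓ (f s) - ℓ (fhat s)| * q s) + D * (Bl * ∫ s, |q s - qc s|) :=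
        add_le_add stepA teleBound
    _ = (∫ s, |ℓ (f s) - ℓ (fhat s)| * q s) + D * Bl * ∫ s, |q s - qc s| := by ring
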